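/- Let v ≥ 1 be a natural number and let n : ℕ → ℕ be a function such that for every j ≤ v, n(j) is even, n(j) ≤ 2j, and n(j) ≤ 2(v − j). Then Σ_{k=1}^{v} 2·C_{n(k−1)/2} ≤ 4·Σ_{i=0}^{⌊v/2⌋} C_i, where C_m denotes the m-th Catalan number. -/

import Mathlib

lemma catalan_mono : Monotone catalan := by
  apply monotone_nat_of_le_succ
  intro m
  rw [catalan_succ]
  have h := Finset.single_le_sum (f := fun i : Fin m.succ => catalan i * catalan (m - i))
    (fun i _ => Nat.zero_le _) (Finset.mem_univ (Fin.last m))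
  simpa using h

/-- The multiplication count of the step-by-step Kauffman bracket method:
`Σ_{k=1}^{v} 2·C_{n(k−1)/2} ≤ 4·Σ_{i=0}^{⌊v/2⌋} C_i`. -/
theorem stepwise_multiplication_count_bound
    (v : ℕ) (hv : 1 ≤ v) (n : ℕ → ℕ)
    (hn : ∀ j ≤ v, Even (n j) ∧ n j ≤ 2 * j ∧ n j ≤ 2 * (v - j)) :
    ∑ k ∈ Finset.Icc 1 v, 2 * catalan (n (k - 1) / 2)
      ≤ 4 * ∑ i ∈ Finset.range (v / 2 + 1), catalan i := by
  have hsum : ∑ k ∈ Finset.Icc 1 v, 2 * catalan (n (k - 1) / 2)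
      = ∑ j ∈ Finset.range v, 2 * catalan (n j / 2) := by
    rw [show Finset.Icc 1 v = Finset.Ico 1 (v + 1) from by rw [Finset.Ico_add_one_right_eq_Icc],
      Finset.sum_Ico_eq_sum_range]
    simp
  rw [hsum, ← Finset.sum_filter_add_sum_filter_not (Finset.range v) (fun j => j ≤ v / 2)]
  have h1 : ∑ j ∈ (Finset.range v).filter (fun j => j ≤ v / 2), 2 * catalan (n j / 2)
      ≤ 2 * ∑ i ∈ Finset.range (v / 2 + 1), catalan i :=
    calc ∑ j ∈ (Finset.range v).filter (fun j => j ≤ v / 2), 2 * catalan (n j / 2)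
        ≤ ∑ j ∈ (Finset.range v).filter (fun j => j ≤ v / 2), 2 * catalan j := by
          apply Finset.sum_le_sum
          intro j hj
          simp only [Finset.mem_filter, Finset.mem_range] at hj
          have hle : n j / 2 ≤ j := Nat.div_le_of_le_mul
            (((hn j (le_of_lt hj.1)).2.1).trans (by omega))
          exact Nat.mul_le_mul_left 2 (catalan_mono hle)
      _ ≤ ∑ j ∈ Finset.range (v / 2 + 1), 2 * catalan j := by
          apply Finset.sum_le_sum_of_subset_of_nonneg
          · intro j hj
            simp only [Finset.mem_filter, Finset.mem_range] at hj
            exact Finset.mem_range.mpr (Nat.lt_succ_of_le hj.2)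
          · exact fun _ _ _ => Nat.zero_le _
      _ = 2 * ∑ i ∈ Finset.range (v / 2 + 1), catalan i := by rw [Finset.mul_sum]
  have h2 : ∑ j ∈ (Finset.range v).filter (fun j => ¬ j ≤ v / 2), 2 * catalan (n j / 2)
      ≤ 2 * ∑ i ∈ Finset.range (v / 2 + 1), catalan i :=
    calc ∑ j ∈ (Finset.range v).filter (fun j => ¬ j ≤ v / 2), 2 * catalan (n j / 2)
        ≤ ∑ j ∈ (Finset.range v).filter (fun j => ¬ j ≤ v / 2), 2 * catalan (v - j) := by
          apply Finset.sum_le_sum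
          intro j hj
          simp only [Finset.mem_filter, Finset.mem_range] at hj
          have hle : n j / 2 ≤ v - j := Nat.div_le_of_le_mul
            (((hn j (le_of_lt hj.1)).2.2).trans (by omega))
          exact Nat.mul_le_mul_left 2 (catalan_mono hle)
      _ = ∑ i ∈ ((Finset.range v).filter (fun j => ¬ j ≤ v / 2)).image (fun j => v - j),
            2 * catalan i := by
          rw [Finset.sum_image]
          intro a ha b hb hab
          simp only [Finset.mem_coe, Finset.mem_filter, Finset.mem_range] at ha hb hab
          omega
      _ ≤ ∑ i ∈ Finset.range (v / 2 + 1), 2 * catalan i := by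
          apply Finset.sum_le_sum_of_subset_of_nonneg
          · intro i hi
            simp only [Finset.mem_image, Finset.mem_filter, Finset.mem_range] at hi
            obtain ⟨j, ⟨hjv, hjhalf⟩, rfl⟩ := hi
            exact Finset.mem_range.mpr (by omega)
          · exact fun _ _ _ => Nat.zero_le _
      _ = 2 * ∑ i ∈ Finset.range (v / 2 + 1), catalan i := by rw [Finset.mul_sum]
  omega
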